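/- Let V be a finite-dimensional real vector space, b a positive-definite symmetric bilinear form on V, c > 0 and h > c real numbers, and α₁,…,α_m linear functionals on V satisfying Σ_{j=1}^m α_j(ξ)² = 2c·b(ξ,ξ) for all ξ ∈ V. Let z₁,…,z_m be complex numbers with |z_j| = 1 and let t ∈ (−1, 0]. Then for every nonzero ξ ∈ V one has (h+c)·b(ξ,ξ) − t·Σ_{j=1}^m Re(z_j/(1 + t·z_j))·α_j(ξ)² ≥ (h−c)·b(ξ,ξ) > 0; in particular this quadratic form is positive definite. -/

import Mathlib

lemma key_bound (t : ℝ) (ht1 : -1 < t) (ht0 : t ≤ 0) (u : ℂ)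
    (hu : ‖u‖ = 1) : t * (u / (1 + (t : ℂ) * u)).re ≤ 1 := by
  have hx : |u.re| ≤ 1 := hu ▸ Complex.abs_re_le_norm u
  have hx1 : u.re ≤ 1 := (abs_le.mp hx).2
  have hns : u.re * u.re + u.im * u.im = 1 := by
    have := Complex.normSq_eq_norm_sq u
    rw [hu] at this
    rw [Complex.normSq_apply] at this; linarith
  have htx : 0 < 1 + t * u.re := by nlinarith
  have hne : (1 + (t : ℂ) * u) ≠ 0 := by
    intro h
    have : ‖(t : ℂ) * u‖ = 1 := by
      have : (t : ℂ) * u = -1 := by linear_combination h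
      rw [this]; simp
    rw [norm_mul, hu, Complex.norm_real, Real.norm_eq_abs, mul_one] at this
    have : |t| < 1 := abs_lt.mpr ⟨ht1, by linarith⟩
    linarith [abs_lt.mpr (⟨ht1, by linarith⟩ : -1 < t ∧ t < 1)]
  have hd : 0 < Complex.normSq (1 + (t : ℂ) * u) := Complex.normSq_pos.2 hne
  have hre : (u / (1 + (t : ℂ) * u)).re
      = (u.re + t) / Complex.normSq (1 + (t : ℂ) * u) := by
    rw [Complex.div_re]
    have h1 : (1 + (t : ℂ) * u).re = 1 + t * u.re := by simp
    have h2 : (1 + (t : ℂ) * u).im = t * u.im := by simp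
    rw [h1, h2]
    field_simp
    ring_nf
    nlinarith [hns]
  rw [hre]
  have hdval : Complex.normSq (1 + (t : ℂ) * u) = 1 + 2 * t * u.re + t * t := by
    simp [Complex.normSq_apply]
    nlinarith [hns]
  rw [mul_div_assoc' t _ _, div_le_one hd, hdval]
  nlinarith
/-- Lemma "hessian": if `b` is a positive-definite symmetric bilinear form on a
finite-dimensional real vector space, `0 < c < h`, the linear functionals `α j` satisfy
`Σ_j α_j(ξ)² = 2c·b(ξ,ξ)`, the `z j` are unit complex numbers and `t ∈ (-1, 0]`, then for
every nonzero `ξ` the quadratic form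
`(h+c)·b(ξ,ξ) - t·Σ_j Re(z_j/(1+t z_j))·α_j(ξ)²` is bounded below by `(h-c)·b(ξ,ξ) > 0`;
in particular it is positive definite. -/
theorem hessian_positive_definite {V : Type*} [AddCommGroup V] [Module ℝ V]
    [FiniteDimensional ℝ V]
    (b : LinearMap.BilinForm ℝ V) (hbsymm : ∀ x y, b x y = b y x)
    (hbpos : ∀ ξ : V, ξ ≠ 0 → 0 < b ξ ξ)
    (c h : ℝ) (hc : 0 < c) (hh : c < h)
    (m : ℕ) (α : Fin m → (V →ₗ[ℝ] ℝ))
    (hα : ∀ ξ : V, ∑ j, (α j ξ) ^ 2 = 2 * c * b ξ ξ)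
    (z : Fin m → ℂ) (hz : ∀ j, ‖z j‖ = 1)
    (t : ℝ) (ht1 : -1 < t) (ht0 : t ≤ 0)
    (ξ : V) (hξ : ξ ≠ 0) :
    (h - c) * b ξ ξ ≤
        (h + c) * b ξ ξ - t * ∑ j, (z j / (1 + (t : ℂ) * z j)).re * (α j ξ) ^ 2 ∧
      0 < (h - c) * b ξ ξ := by
  have hb := hbpos ξ hξ
  constructor
  · have hsum : t * ∑ j, (z j / (1 + (t : ℂ) * z j)).re * (α j ξ) ^ 2
        ≤ 2 * c * b ξ ξ := by
      rw [Finset.mul_sum, ← hα ξ]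
      apply Finset.sum_le_sum
      intro j _
      have hk := key_bound t ht1 ht0 (z j) (hz j)
      have hsq : (0:ℝ) ≤ (α j ξ) ^ 2 := sq_nonneg _
      nlinarith
    linarith
  · nlinarith
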